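/- Let (W,S) be a Coxeter group, w ∈ W with reduced word s_{i_1}⋯s_{i_m}, and v ≤ w in Bruhat order. Then there exists a unique subexpression s_{i_{j_1}}⋯s_{i_{j_k}} (with j_1 < ⋯ < j_k) that is a reduced word for v and satisfies: for each l = 0,…,k and each r with j_l < r ≤ j_{l+1} (where j_0 = 0 and j_{k+1} = m), one has s_{i_{j_1}}⋯s_{i_{j_l}} s_{i_r} > s_{i_{j_1}}⋯s_{i_{j_l}} in Bruhat order. -/

import Mathlib

/-!
STATEMENT 0: Existence and uniqueness of the positive (rightmost reduced)
subexpression of Deodhar / Marsh–Rietsch: given a reduced word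
`ω = (i_1, …, i_m)` for `w` in a Coxeter group and `v ≤ w` in Bruhat order,
there is a unique index set `J ⊆ {1,…,m}` such that the subword indexed by `J`
is a reduced word for `v` and for every position `r`, multiplying the partial
product (over indices of `J` before `r`) by `s_{i_r}` increases length.
-/

namespace PaperStmt

open CoxeterSystem

variable {B : Type} {W : Type} [Group W] {M : CoxeterMatrix B}

/-- Bruhat covering relation: `w = u * t` for a reflection `t`, with
`ℓ(w) = ℓ(u) + 1`. -/
def BCov (cs : CoxeterSystem M W) (u w : W) : Prop :=
  (∃ t : W, cs.IsReflection t ∧ w = u * t) ∧ cs.length w = cs.length u + 1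

/-- Bruhat order, as the reflexive-transitive closure of the covering
relation. -/
def BLE (cs : CoxeterSystem M W) : W → W → Prop :=
  Relation.ReflTransGen (BCov cs)

/-- The subword of `ω` consisting of the letters at positions in `J` that are
`< r`. -/
def maskWord (ω : List B) (J : Finset (Fin ω.length)) (r : ℕ) : List B :=
  ((List.finRange ω.length).filter (fun j => decide (j ∈ J ∧ j.val < r))).map ω.get

/-- The product of the simple reflections of the subword of `ω` indexed by the
positions of `J` that are `< r`. -/
def prefixEl (cs : CoxeterSystem M W) (ω : List B) (J : Finset (Fin ω.length)) (r : ℕ) : W :=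
  cs.wordProd (maskWord ω J r)

/-- `J` is the index set of the positive subexpression of `ω` for `v`:
the subword indexed by `J` is a reduced word for `v`, and for every position
`r` of `ω`, right multiplication of the partial product over `J`-indices `< r`
by `s_{i_r}` increases length.  (For `r` in the gap `j_l < r ≤ j_{l+1}`, the
partial product over `J`-indices `< r` is exactly `s_{i_{j_1}} ⋯ s_{i_{j_l}}`,
so this is the condition of the statement.) -/
def IsPosSubexpr (cs : CoxeterSystem M W) (ω : List B) (J : Finset (Fin ω.length)) (v : W) :
    Prop :=
  cs.wordProd (maskWord ω J ω.length) = v ∧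
  J.card = cs.length v ∧
  ∀ r : Fin ω.length,
    cs.length (prefixEl cs ω J r.val * cs.simple (ω.get r)) > cs.length (prefixEl cs ω J r.val)



section Helpers

open List
open scoped Classical

variable (cs : CoxeterSystem M W)

local prefix:100 "ss" => cs.simple
local prefix:100 "ππ" => cs.wordProd
local prefix:100 "λλ" => cs.length

/-- The involutive map on `W × Bool` attached to a simple generator. -/
noncomputable def refFun (i : B) : W × Bool → W × Bool :=
  fun p => (ss i * p.1 * ss i, xor (decide (p.1 = ss i)) p.2)

lemma refFun_involutive (i : B) : Function.Involutive (refFun cs i) := by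
  rintro ⟨t, b⟩
  simp only [refFun]
  have h0 : ss i * (ss i * t * ss i) * ss i = t := by
    calc ss i * (ss i * t * ss i) * ss i = (ss i * ss i) * t * (ss i * ss i) := by group
    _ = t := by rw [cs.simple_mul_simple_self]; group
  have h1 : (ss i * t * ss i = ss i) ↔ (t = ss i) := by
    constructor
    · intro h
      have := congrArg (fun z => ss i * z * ss i) h
      simpa [← mul_assoc, cs.simple_mul_simple_self, cs.simple_mul_simple_cancel_right] using this
    · rintro rfl
      rw [cs.simple_mul_simple_self, one_mul]
  have h1' : decide (ss i * t * ss i = ss i) = decide (t = ss i) := decide_eq_decide.mpr h1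
  rw [h0]
  cases b <;> simp [h1]

/-- The permutation of `W × Bool` attached to a simple generator. -/
noncomputable def refPerm (i : B) : Equiv.Perm (W × Bool) :=
  (refFun_involutive cs i).toPerm

lemma refPerm_apply (i : B) (t : W) (b : Bool) :
    refPerm cs i (t, b) = (ss i * t * ss i, xor (decide (t = ss i)) b) := rfl

/-- The sequence of reflections appearing in the relator computation. -/
noncomputable def aseq (x : W) (z : W) (r : ℕ) : W :=
  (x ^ (r / 2))⁻¹ * z * x ^ ((r + 1) / 2)

lemma conj_pow_eq {z x : W} (hz : z * z = 1) (q : ℕ) :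
    z * x ^ q * z = (z * x * z) ^ q := by
  induction q with
  | zero => simpa using hz
  | succ q ih =>
    rw [pow_succ, pow_succ, ← ih]
    have h2 : (z * x ^ q * z) * (z * x * z) = z * x ^ q * (z * z) * (x * z) := by
      simp only [mul_assoc]
    rw [h2, hz, mul_one]
    simp only [mul_assoc]

lemma aseq_periodic {x z : W} (hz : z * z = 1) (hzx : z * x * z = x⁻¹) {m : ℕ}
    (hxm : x ^ m = 1) (r : ℕ) : aseq x z (r + m) = aseq x z r := by
  set p := (r + m) / 2 - r / 2 with hp
  set q := (r + m + 1) / 2 - (r + 1) / 2 with hq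
  have h1 : (r + m) / 2 = r / 2 + p := by omega
  have h2 : (r + m + 1) / 2 = (r + 1) / 2 + q := by omega
  have hpq : p + q = m := by omega
  have hkey : z * x ^ q = x ^ p * z := by
    have e1 : z * x ^ q * z = (x⁻¹) ^ q := by rw [conj_pow_eq hz, hzx]
    have e2 : x ^ p = (x⁻¹) ^ q := by
      rw [inv_pow]
      apply eq_inv_of_mul_eq_one_left
      rw [← pow_add, hpq, hxm]
    have e3 : (z * x ^ q * z) * z = z * x ^ q := by
      rw [mul_assoc (z * x ^ q) z z, hz, mul_one]
    rw [← e3, e1, ← e2]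
  unfold aseq
  rw [h1, h2, pow_add, pow_add, mul_inv_rev]
  set a := x ^ (r / 2) with ha
  set c := x ^ ((r + 1) / 2) with hc
  set P := x ^ p with hP
  set Q := x ^ q with hQ
  have haP : a⁻¹ * P = P * a⁻¹ := ((Commute.pow_pow_self x (r / 2) p).inv_left).eq
  have hcQ : c * Q = Q * c := pow_mul_comm x _ _
  calc (P⁻¹ * a⁻¹) * z * (c * Q)
      = P⁻¹ * (a⁻¹ * (z * (Q * c))) := by rw [← hcQ]; simp only [mul_assoc]
    _ = P⁻¹ * (a⁻¹ * (P * (z * c))) := by rw [← mul_assoc z Q c, hkey]; simp only [mul_assoc]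
    _ = P⁻¹ * ((a⁻¹ * P) * (z * c)) := by simp only [mul_assoc]
    _ = P⁻¹ * (P * (a⁻¹ * (z * c))) := by rw [haP]; simp only [mul_assoc]
    _ = a⁻¹ * z * c := by rw [inv_mul_cancel_left]; simp only [mul_assoc]

/-- count of `t` among `aseq` values below `2*n`. -/
noncomputable def acnt (x z : W) (n : ℕ) (t : W) : ℕ :=
  (List.range (2 * n)).countP (fun r => decide (aseq x z r = t))

lemma refPerm_mul_pow_apply (i i' : B) (n : ℕ) (t : W) (b : Bool) :
    ((refPerm cs i * refPerm cs i') ^ n) (t, b) =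
      ((ss i * ss i') ^ n * t * ((ss i * ss i') ^ n)⁻¹,
        xor (decide (Odd (acnt (ss i * ss i') (ss i') n t))) b) := by
  induction n with
  | zero => simp [acnt]
  | succ n ih =>
    rw [pow_succ']
    have hev : ((refPerm cs i * refPerm cs i') * ((refPerm cs i * refPerm cs i') ^ n)) (t, b)
        = (refPerm cs i) ((refPerm cs i') (((refPerm cs i * refPerm cs i') ^ n) (t, b))) := rfl
    rw [hev, ih, refPerm_apply, refPerm_apply]
    set x := ss i * ss i' with hx
    have hinv : ss i' * ss i = x⁻¹ := by
      rw [hx, mul_inv_rev, cs.inv_simple, cs.inv_simple]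
    have hfst : ss i * (ss i' * (x ^ n * t * (x ^ n)⁻¹) * ss i') * ss i
        = x ^ (n + 1) * t * (x ^ (n + 1))⁻¹ := by
      calc ss i * (ss i' * (x ^ n * t * (x ^ n)⁻¹) * ss i') * ss i
          = (ss i * ss i') * (x ^ n * t * (x ^ n)⁻¹) * (ss i' * ss i) := by
            simp only [mul_assoc]
        _ = x * (x ^ n * t * (x ^ n)⁻¹) * x⁻¹ := by rw [hinv, ← hx]
        _ = x ^ (n + 1) * t * (x ^ (n + 1))⁻¹ := by
            rw [pow_succ' x n, mul_inv_rev x (x ^ n)]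
            simp only [mul_assoc]
    have hsnd : xor (decide (ss i' * (x ^ n * t * (x ^ n)⁻¹) * ss i' = ss i))
          (xor (decide (x ^ n * t * (x ^ n)⁻¹ = ss i'))
            (xor (decide (Odd (acnt x (ss i') n t))) b))
        = xor (decide (Odd (acnt x (ss i') (n + 1) t))) b := by
      have haseqB : aseq x (ss i') (2 * n) = (x ^ n)⁻¹ * ss i' * x ^ n := by
        unfold aseq
        rw [show 2 * n / 2 = n by omega, show (2 * n + 1) / 2 = n by omega]
      have haseqA : aseq x (ss i') (2 * n + 1) = (x ^ n)⁻¹ * (ss i' * ss i * ss i') * x ^ n := by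
        unfold aseq
        rw [show (2 * n + 1) / 2 = n by omega, show (2 * n + 1 + 1) / 2 = n + 1 by omega,
          pow_succ' x n]
        calc (x ^ n)⁻¹ * ss i' * (x * x ^ n)
            = (x ^ n)⁻¹ * ((ss i' * x) * x ^ n) := by simp only [mul_assoc]
          _ = (x ^ n)⁻¹ * (ss i' * ss i * ss i') * x ^ n := by rw [hx]; simp only [mul_assoc]
      have hB : decide (x ^ n * t * (x ^ n)⁻¹ = ss i') = decide (aseq x (ss i') (2 * n) = t) := by
        apply decide_eq_decide.mpr
        rw [haseqB]
        constructor
        · intro h; rw [← h]; simp [mul_assoc]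
        · intro h; rw [← h]; simp [← mul_assoc]
      have hA : decide (ss i' * (x ^ n * t * (x ^ n)⁻¹) * ss i' = ss i)
          = decide (aseq x (ss i') (2 * n + 1) = t) := by
        apply decide_eq_decide.mpr
        rw [haseqA]
        constructor
        · intro h
          have h2 : ss i' * (ss i' * (x ^ n * t * (x ^ n)⁻¹) * ss i') * ss i'
              = ss i' * ss i * ss i' := by rw [h]
          have h3 : ss i' * (ss i' * (x ^ n * t * (x ^ n)⁻¹) * ss i') * ss i'
              = x ^ n * t * (x ^ n)⁻¹ := by
            calc ss i' * (ss i' * (x ^ n * t * (x ^ n)⁻¹) * ss i') * ss i'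
                = (ss i' * ss i') * (x ^ n * t * (x ^ n)⁻¹) * (ss i' * ss i') := by
                  simp only [mul_assoc]
              _ = x ^ n * t * (x ^ n)⁻¹ := by rw [cs.simple_mul_simple_self]; simp
          rw [h3] at h2
          rw [← h2]; simp [mul_assoc]
        · intro h; rw [← h]
          calc ss i' * (x ^ n * ((x ^ n)⁻¹ * (ss i' * ss i * ss i') * x ^ n) * (x ^ n)⁻¹) * ss i'
              = ss i' * ((x ^ n * (x ^ n)⁻¹) * (ss i' * ss i * ss i') * (x ^ n * (x ^ n)⁻¹)) * ss i' := by
                simp only [mul_assoc]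
            _ = ss i' * (ss i' * ss i * ss i') * ss i' := by simp
            _ = (ss i' * ss i') * ss i * (ss i' * ss i') := by simp only [mul_assoc]
            _ = ss i := by rw [cs.simple_mul_simple_self]; simp
      have hcnt : acnt x (ss i') (n + 1) t = acnt x (ss i') n t
          + (if aseq x (ss i') (2 * n) = t then 1 else 0)
          + (if aseq x (ss i') (2 * n + 1) = t then 1 else 0) := by
        unfold acnt
        rw [show 2 * (n + 1) = (2 * n + 1) + 1 by omega, List.range_succ, List.range_succ,
          List.countP_append, List.countP_append]
        simp [List.countP_cons]
      have key : ∀ (u v : Bool) (c : ℕ),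
          xor u (xor v (decide (Odd c)))
            = decide (Odd (c + (if v then 1 else 0) + (if u then 1 else 0))) := by
        intro u v c
        have hnot : ∀ d : ℕ, decide (Odd (d + 1)) = !decide (Odd d) := by
          intro d
          rw [decide_eq_decide.mpr Nat.odd_add_one, decide_not]
        rcases u <;> rcases v <;> simp [hnot]
      rw [hA, hB, hcnt]
      have hkey2 := key (decide (aseq x (ss i') (2 * n + 1) = t))
        (decide (aseq x (ss i') (2 * n) = t)) (acnt x (ss i') n t)
      simp only [decide_eq_true_eq] at hkey2
      rw [show ∀ a b c d : Bool, (a ^^ (b ^^ (c ^^ d))) = ((a ^^ (b ^^ c)) ^^ d) by decide,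
        hkey2]
    rw [← hfst, ← hsnd]


lemma refPerm_liftable : M.IsLiftable (fun i => refPerm cs i) := by
  intro i i'
  apply Equiv.ext
  rintro ⟨t, b⟩
  rw [refPerm_mul_pow_apply]
  have hz : ss i' * ss i' = 1 := cs.simple_mul_simple_self i'
  have hzx : ss i' * (ss i * ss i') * ss i' = (ss i * ss i')⁻¹ := by
    rw [mul_inv_rev, cs.inv_simple, cs.inv_simple]
    calc ss i' * (ss i * ss i') * ss i' = ss i' * ss i * (ss i' * ss i') := by
          simp only [mul_assoc]
      _ = ss i' * ss i := by rw [hz, mul_one]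
  have hxm : (ss i * ss i') ^ M i i' = 1 := cs.simple_mul_simple_pow i i'
  have hev : ¬ Odd (acnt (ss i * ss i') (ss i') (M i i') t) := by
    unfold acnt
    rw [two_mul, List.range_add, List.countP_append, List.countP_map]
    have hcongr : List.countP
          ((fun r => decide (aseq (ss i * ss i') (ss i') r = t)) ∘ (fun x => M i i' + x))
          (List.range (M i i'))
        = List.countP (fun r => decide (aseq (ss i * ss i') (ss i') r = t))
            (List.range (M i i')) := by
      apply List.countP_congr
      intro r _
      simp only [Function.comp_apply]
      rw [add_comm (M i i') r, aseq_periodic hz hzx hxm r]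
    rw [hcongr, Nat.odd_iff]
    omega
  have hb : (decide (Odd (acnt (ss i * ss i') (ss i') (M i i') t))) = false := by
    simpa using hev
  rw [hxm, hb]
  simp

/-- The reflection-cocycle homomorphism. -/
noncomputable def theta : W →* Equiv.Perm (W × Bool) :=
  cs.lift ⟨fun i => refPerm cs i, refPerm_liftable cs⟩

lemma theta_simple (i : B) : theta cs (ss i) = refPerm cs i :=
  cs.lift_apply_simple (refPerm_liftable cs) i

lemma theta_wordProd (ω : List B) (t : W) (b : Bool) :
    theta cs (ππ ω) (t, b) = (ππ ω * t * (ππ ω)⁻¹,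
      xor (decide (Odd ((cs.rightInvSeq ω).countP (fun u => decide (u = t))))) b) := by
  induction ω generalizing t b with
  | nil => simp [rightInvSeq]
  | cons i ω ih =>
    rw [cs.wordProd_cons, map_mul]
    have hev : (theta cs (ss i) * theta cs (ππ ω)) (t, b)
        = theta cs (ss i) (theta cs (ππ ω) (t, b)) := rfl
    rw [hev, ih, theta_simple, refPerm_apply]
    have hris : cs.rightInvSeq (i :: ω) = ((ππ ω)⁻¹ * ss i * ππ ω) :: cs.rightInvSeq ω := rfl
    have hfst : ss i * (ππ ω * t * (ππ ω)⁻¹) * ss i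
        = (ss i * ππ ω) * t * (ss i * ππ ω)⁻¹ := by
      rw [mul_inv_rev (ss i) (ππ ω), cs.inv_simple]
      simp only [mul_assoc]
    have hcond : decide (ππ ω * t * (ππ ω)⁻¹ = ss i)
        = decide ((ππ ω)⁻¹ * ss i * ππ ω = t) := by
      apply decide_eq_decide.mpr
      constructor
      · intro h; rw [← h]; simp [mul_assoc]
      · intro h; rw [← h]; simp [← mul_assoc]
    have hcnt : (cs.rightInvSeq (i :: ω)).countP (fun u => decide (u = t))
        = (cs.rightInvSeq ω).countP (fun u => decide (u = t))
          + (if (ππ ω)⁻¹ * ss i * ππ ω = t then 1 else 0) := by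
      rw [hris, List.countP_cons]
      simp
    have hnot : ∀ d : ℕ, decide (Odd (d + 1)) = !decide (Odd d) := by
      intro d
      rw [decide_eq_decide.mpr Nat.odd_add_one, decide_not]
    rw [hfst, hcond, hcnt]
    by_cases hc : (ππ ω)⁻¹ * ss i * ππ ω = t <;> simp [hc, hnot]

/-- The sign cocycle. -/
noncomputable def eta (w t : W) : Bool := (theta cs w (t, false)).2

lemma eta_wordProd (ω : List B) (t : W) :
    eta cs (ππ ω) t
      = decide (Odd ((cs.rightInvSeq ω).countP (fun u => decide (u = t)))) := by
  rw [eta, theta_wordProd]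
  simp

lemma theta_apply (w t : W) (b : Bool) :
    theta cs w (t, b) = (w * t * w⁻¹, xor (eta cs w t) b) := by
  obtain ⟨ω, _, rfl⟩ := cs.exists_reduced_word' w
  rw [theta_wordProd, eta_wordProd]

lemma eta_mul (w₁ w₂ t : W) :
    eta cs (w₁ * w₂) t = xor (eta cs w₁ (w₂ * t * w₂⁻¹)) (eta cs w₂ t) := by
  unfold eta
  rw [map_mul]
  have hev : (theta cs w₁ * theta cs w₂) (t, false)
      = theta cs w₁ (theta cs w₂ (t, false)) := rfl
  rw [hev, theta_apply, theta_apply, theta_apply]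
  simp

lemma eta_one (t : W) : eta cs 1 t = false := by
  unfold eta
  rw [map_one]
  rfl

lemma eta_simple (i : B) (t : W) : eta cs (ss i) t = decide (t = ss i) := by
  unfold eta
  rw [theta_simple, refPerm_apply]
  simp

lemma eta_refl {t : W} (ht : cs.IsReflection t) : eta cs t t = true := by
  obtain ⟨u, i, rfl⟩ := ht
  have hxorfalse : ∀ a b : Bool, (a ^^ b) = false ↔ a = b := by decide
  have h1 : eta cs (u⁻¹) (u * ss i * u⁻¹) = eta cs u (ss i) := by
    have h0 := eta_mul cs u u⁻¹ (u * ss i * u⁻¹)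
    rw [mul_inv_cancel, eta_one] at h0
    have he : u⁻¹ * (u * ss i * u⁻¹) * u⁻¹⁻¹ = ss i := by group
    rw [he] at h0
    exact ((hxorfalse _ _).mp h0.symm).symm
  have h2 := eta_mul cs (u * ss i) u⁻¹ (u * ss i * u⁻¹)
  have he2 : u⁻¹ * (u * ss i * u⁻¹) * u⁻¹⁻¹ = ss i := by group
  rw [he2] at h2
  have h3 := eta_mul cs u (ss i) (ss i)
  have he3 : ss i * ss i * (ss i)⁻¹ = ss i := by
    rw [cs.simple_mul_simple_self, one_mul, cs.inv_simple]
  rw [he3, eta_simple] at h3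
  rw [show (u * ss i) * u⁻¹ = u * ss i * u⁻¹ by rfl] at h2
  rw [h2, h3, h1]
  cases (eta cs u (ss i)) <;> simp

lemma eta_lt {w t : W} (h : eta cs w t = true) : λλ (w * t) < λλ w := by
  obtain ⟨ω, hred, rfl⟩ := cs.exists_reduced_word' w
  rw [eta_wordProd] at h
  have hodd := of_decide_eq_true h
  have hpos : 0 < (cs.rightInvSeq ω).countP (fun u => decide (u = t)) := by
    rcases hodd with ⟨k, hk⟩
    omega
  obtain ⟨u, hu, hu2⟩ := List.countP_pos_iff.mp hpos
  have : u = t := of_decide_eq_true hu2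
  subst this
  exact (cs.isRightInversion_of_mem_rightInvSeq hred hu).2

lemma eta_of_lt {w t : W} (ht : cs.IsReflection t) (hlt : λλ (w * t) < λλ w) :
    eta cs w t = true := by
  by_contra h
  have h' : eta cs w t = false := by simpa using h
  have h2 := eta_mul cs w t t
  have he : t * t * t⁻¹ = t := by rw [ht.mul_self, one_mul, ht.inv]
  rw [he, eta_refl cs ht, h'] at h2
  have h3 : eta cs (w * t) t = true := by simpa using h2
  have h4 := eta_lt cs h3
  have h5 : w * t * t = w := by rw [mul_assoc, ht.mul_self, mul_one]
  rw [h5] at h4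
  omega

/-- Strong exchange property. -/
theorem strong_exchange {ω : List B} {t : W} (ht : cs.IsReflection t)
    (hlt : λλ (ππ ω * t) < λλ (ππ ω)) :
    ∃ j, ∃ _ : j < ω.length, ππ (ω.eraseIdx j) = ππ ω * t := by
  have h1 : eta cs (ππ ω) t = true := eta_of_lt cs ht hlt
  rw [eta_wordProd] at h1
  have hodd := of_decide_eq_true h1
  have hpos : 0 < (cs.rightInvSeq ω).countP (fun u => decide (u = t)) := by
    rcases hodd with ⟨k, hk⟩
    omega
  obtain ⟨u, hu, hu2⟩ := List.countP_pos_iff.mp hpos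
  have hut : u = t := of_decide_eq_true hu2
  subst hut
  obtain ⟨j, hj, hget⟩ := List.mem_iff_getElem.mp hu
  have hj' : j < ω.length := by
    rw [cs.length_rightInvSeq] at hj
    exact hj
  refine ⟨j, hj', ?_⟩
  have := cs.wordProd_mul_getD_rightInvSeq ω j
  rw [List.getD_eq_getElem _ _ hj, hget] at this
  exact this.symm


/-- Forward subword property. -/
theorem exists_reduced_sublist {v : W} {ω : List B} (hred : cs.IsReduced ω)
    (hvw : BLE cs v (ππ ω)) :
    ∃ σ, σ.Sublist ω ∧ ππ σ = v ∧ σ.length = λλ v := by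
  induction hvw using Relation.ReflTransGen.head_induction_on with
  | refl => exact ⟨ω, List.Sublist.refl ω, rfl, hred.symm⟩
  | head hac hcb ih =>
    obtain ⟨σ, hsub, hprod, hlen⟩ := ih
    rename_i a c
    obtain ⟨⟨t, htrefl, hca⟩, hlen'⟩ := hac
    have ha : a = c * t := by rw [hca, mul_assoc, htrefl.mul_self, mul_one]
    have hlt : λλ (ππ σ * t) < λλ (ππ σ) := by
      rw [hprod, ← ha]
      omega
    obtain ⟨j, hj, hprod'⟩ := strong_exchange cs htrefl hlt
    refine ⟨σ.eraseIdx j, (List.eraseIdx_sublist σ j).trans hsub, ?_, ?_⟩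
    · rw [hprod', hprod, ← ha]
    · have h6 := List.length_eraseIdx_add_one hj
      omega


/-- Replacement for the removed `List.enum`. -/
def enumL (ω : List B) : List (ℕ × B) := ω.zipIdx.map Prod.swap

@[simp] lemma enumL_nil : enumL ([] : List B) = [] := rfl

@[simp] lemma length_enumL (ω : List B) : (enumL ω).length = ω.length := by
  simp [enumL]

@[simp] lemma getElem_enumL (ω : List B) (k : ℕ) (h : k < (enumL ω).length) :
    (enumL ω)[k] = (k, ω[k]'(by simpa using h)) := by
  simp [enumL]

lemma fst_lt_of_mem_enumL {ω : List B} {p : ℕ × B} (hp : p ∈ enumL ω) : p.1 < ω.length := by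
  unfold enumL at hp
  obtain ⟨q, hq, rfl⟩ := List.mem_map.mp hp
  simpa using List.snd_lt_of_mem_zipIdx hq

/-- ℕ-indexed version of `maskWord`. -/
def mwN (ω : List B) (K : Finset ℕ) (r : ℕ) : List B :=
  ((enumL ω).filter (fun p => decide (p.1 ∈ K ∧ p.1 < r))).map Prod.snd

/-- ℕ-indexed version of `IsPosSubexpr`. -/
def PosN (ω : List B) (K : Finset ℕ) (v : W) : Prop :=
  K ⊆ Finset.range ω.length ∧
  ππ (mwN ω K ω.length) = v ∧
  K.card = λλ v ∧
  ∀ r, ∀ hr : r < ω.length, λλ (ππ (mwN ω K r) * ss (ω.get ⟨r, hr⟩)) > λλ (ππ (mwN ω K r))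

lemma enum_concat (ω : List B) (i : B) :
    enumL (ω ++ [i]) = enumL ω ++ [(ω.length, i)] := by
  apply List.ext_getElem
  · simp
  · intro k h1 h2
    have hk : k < ω.length + 1 := by simpa using h1
    simp only [getElem_enumL, List.getElem_append, length_enumL]
    by_cases h : k < ω.length
    · simp [h, getElem_enumL]
    · have hk0 : k - ω.length = 0 := by omega
      have hkn : k = ω.length := by omega
      simp [h, hk0, hkn, getElem_enumL]

lemma mwN_congr {ω : List B} {K K' : Finset ℕ} {r r' : ℕ}
    (h : ∀ j, j < ω.length → ((j ∈ K ∧ j < r) ↔ (j ∈ K' ∧ j < r'))) :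
    mwN ω K r = mwN ω K' r' := by
  unfold mwN
  congr 1
  apply List.filter_congr
  intro p hp
  exact decide_eq_decide.mpr (h p.1 (fst_lt_of_mem_enumL hp))

lemma mwN_concat (ω : List B) (i : B) (K : Finset ℕ) (r : ℕ) :
    mwN (ω ++ [i]) K r
      = mwN ω K r ++ (if ω.length ∈ K ∧ ω.length < r then [i] else []) := by
  unfold mwN
  rw [enum_concat, List.filter_append, List.map_append]
  congr 1
  by_cases h : ω.length ∈ K ∧ ω.length < r <;> simp [h]

lemma mwN_truncate (ω : List B) (K : Finset ℕ) {r : ℕ} (h : ω.length ≤ r) :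
    mwN ω K r = mwN ω K ω.length :=
  mwN_congr (fun j hj => by constructor <;> (rintro ⟨h1, h2⟩; exact ⟨h1, by omega⟩))

lemma mwN_insert (ω : List B) (K : Finset ℕ) {m : ℕ} (hm : ω.length ≤ m) (r : ℕ) :
    mwN ω (insert m K) r = mwN ω K r :=
  mwN_congr (fun j hj => by
    constructor
    · rintro ⟨h1, h2⟩
      rcases Finset.mem_insert.mp h1 with h | h
      · omega
      · exact ⟨h, h2⟩
    · rintro ⟨h1, h2⟩
      exact ⟨Finset.mem_insert_of_mem h1, h2⟩)

lemma mwN_erase (ω : List B) (K : Finset ℕ) {m : ℕ} (hm : ω.length ≤ m) (r : ℕ) :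
    mwN ω (K.erase m) r = mwN ω K r :=
  mwN_congr (fun j hj => by
    constructor
    · rintro ⟨h1, h2⟩
      exact ⟨Finset.mem_of_mem_erase h1, h2⟩
    · rintro ⟨h1, h2⟩
      exact ⟨Finset.mem_erase.mpr ⟨by omega, h1⟩, h2⟩)

lemma enum_eq_map_finRange (ω : List B) :
    enumL ω = (List.finRange ω.length).map (fun j => (j.val, ω.get j)) := by
  apply List.ext_getElem
  · simp
  · intro k h1 h2
    simp [getElem_enumL]

lemma maskWord_eq_mwN (ω : List B) (J : Finset (Fin ω.length)) (r : ℕ) :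
    maskWord ω J r = mwN ω (J.image Fin.val) r := by
  unfold maskWord mwN
  rw [enum_eq_map_finRange, List.filter_map, List.map_map]
  have hpred : ∀ j ∈ List.finRange ω.length,
      ((fun p : ℕ × B => decide (p.1 ∈ J.image Fin.val ∧ p.1 < r)) ∘
        (fun j : Fin ω.length => (j.val, ω.get j))) j
      = (fun j : Fin ω.length => decide (j ∈ J ∧ j.val < r)) j := by
    intro j _
    simp only [Function.comp_apply]
    apply decide_eq_decide.mpr
    constructor
    · rintro ⟨h1, h2⟩
      obtain ⟨b, hb, hbv⟩ := Finset.mem_image.mp h1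
      exact ⟨by rwa [Fin.val_injective hbv] at hb, h2⟩
    · rintro ⟨h1, h2⟩
      exact ⟨Finset.mem_image_of_mem _ h1, h2⟩
  rw [List.filter_congr hpred]
  rfl


lemma get_append_left (ω : List B) (i : B) {r : ℕ} (hr : r < (ω ++ [i]).length)
    (hrn : r < ω.length) : (ω ++ [i]).get ⟨r, hr⟩ = ω.get ⟨r, hrn⟩ := by
  rw [List.get_eq_getElem, List.get_eq_getElem]
  exact List.getElem_append_left hrn

lemma get_append_last (ω : List B) (i : B) (hr : ω.length < (ω ++ [i]).length) :
    (ω ++ [i]).get ⟨ω.length, hr⟩ = i := by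
  rw [List.get_eq_getElem]
  rw [List.getElem_append_right (le_refl ω.length)]
  simp

theorem auxN : ∀ (ω : List B), cs.IsReduced ω → ∀ v : W,
    (∃ σ, σ.Sublist ω ∧ ππ σ = v ∧ σ.length = λλ v) → ∃! K : Finset ℕ, PosN cs ω K v := by
  intro ω
  induction ω using List.reverseRecOn with
  | nil =>
    intro _ v hex
    obtain ⟨σ, hsub, hprod, _⟩ := hex
    rw [List.sublist_nil.mp hsub, cs.wordProd_nil] at hprod
    subst hprod
    refine ⟨∅, ⟨by simp, by simp [mwN, cs.wordProd_nil], by simp, ?_⟩, ?_⟩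
    · intro r hr
      simp at hr
    · intro K hK
      have h1 := hK.1
      simpa [Finset.range_zero, Finset.subset_empty] using h1
  | append_singleton ω i ih =>
    intro hred v hex
    have hredω : cs.IsReduced ω := by
      have h := hred.take ω.length
      rwa [List.take_left] at h
    have hlenp : (ω ++ [i]).length = ω.length + 1 := by simp
    have hnlt : ω.length < (ω ++ [i]).length := by omega
    have hne := cs.length_mul_simple_ne v i
    have hms := cs.length_mul_simple v i
    obtain ⟨σ, hsub, hprod, hlen⟩ := hex
    obtain ⟨σ₁, σ₂, rfl, hσ₁, hσ₂⟩ := List.sublist_append_iff.mp hsub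
    by_cases hcase : λλ (v * ss i) < λλ v
    · -- Case A : the final letter is used
      have hlvs : λλ (v * ss i) + 1 = λλ v := by omega
      have hexA : ∃ σ', σ'.Sublist ω ∧ ππ σ' = v * ss i ∧ σ'.length = λλ (v * ss i) := by
        rcases List.sublist_singleton.mp hσ₂ with h2 | h2
        · -- σ₂ = [] : use strong exchange
          subst h2
          rw [List.append_nil] at hprod hlen
          have hlt : λλ (ππ σ₁ * ss i) < λλ (ππ σ₁) := by rw [hprod]; exact hcase
          obtain ⟨j, hj, hj2⟩ := strong_exchange cs (cs.isReflection_simple i) hlt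
          refine ⟨σ₁.eraseIdx j, (List.eraseIdx_sublist _ _).trans hσ₁, by rw [hj2, hprod], ?_⟩
          have h6 := List.length_eraseIdx_add_one hj
          omega
        · -- σ₂ = [i']
          subst h2
          have hπ : ππ σ₁ * ss i = v := by
            rw [← hprod, cs.wordProd_append, cs.wordProd_singleton]
          refine ⟨σ₁, hσ₁, ?_, ?_⟩
          · rw [← hπ, cs.simple_mul_simple_cancel_right]
          · have : (σ₁ ++ [i]).length = σ₁.length + 1 := by simp
            omega
      obtain ⟨K', hK', hK'u⟩ := ih hredω (v * ss i) hexA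
      obtain ⟨hK'sub, hK'prod, hK'card, hK'pos⟩ := hK'
      have hnK' : ω.length ∉ K' := fun h => by
        have := Finset.mem_range.mp (hK'sub h); omega
      have hmwA : mwN (ω ++ [i]) (insert ω.length K') ω.length = mwN ω K' ω.length := by
        rw [mwN_concat, if_neg (fun h => by omega), List.append_nil,
          mwN_insert ω K' (le_refl ω.length)]
      have hposA : PosN cs (ω ++ [i]) (insert ω.length K') v := by
        refine ⟨?_, ?_, ?_, ?_⟩
        · intro j hj
          rcases Finset.mem_insert.mp hj with h | h
          · rw [h, Finset.mem_range]; omega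
          · have := Finset.mem_range.mp (hK'sub h)
            rw [Finset.mem_range]; omega
        · rw [hlenp, mwN_concat, if_pos ⟨Finset.mem_insert_self _ _, by omega⟩,
            mwN_insert ω K' (le_refl ω.length), mwN_truncate ω K' (by omega),
            cs.wordProd_append, cs.wordProd_singleton, hK'prod,
            cs.simple_mul_simple_cancel_right]
        · rw [Finset.card_insert_of_notMem hnK', hK'card]
          omega
        · intro r hr
          by_cases hrn : r < ω.length
          · have hmw : mwN (ω ++ [i]) (insert ω.length K') r = mwN ω K' r := by
              rw [mwN_concat, if_neg (fun h => by omega), List.append_nil,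
                mwN_insert ω K' (le_refl ω.length)]
            rw [hmw, get_append_left ω i hr hrn]
            exact hK'pos r hrn
          · have hrn' : r = ω.length := by rw [hlenp] at hr; omega
            subst hrn'
            rw [hmwA, get_append_last ω i hr, hK'prod, cs.simple_mul_simple_cancel_right]
            exact hcase
      refine ⟨insert ω.length K', hposA, ?_⟩
      intro K hK
      obtain ⟨hKsub, hKprod, hKcard, hKpos⟩ := hK
      have hKn : ω.length ∈ K := by
        by_contra hKn
        have h1 : mwN (ω ++ [i]) K (ω.length + 1) = mwN (ω ++ [i]) K ω.length :=
          mwN_congr (fun j hj => by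
            constructor
            · rintro ⟨ha, hb⟩
              refine ⟨ha, ?_⟩
              have : j ≠ ω.length := fun hc => hKn (hc ▸ ha)
              omega
            · rintro ⟨ha, hb⟩
              exact ⟨ha, by omega⟩)
        have h2 := hKpos ω.length hnlt
        rw [get_append_last ω i hnlt] at h2
        rw [hlenp, h1] at hKprod
        rw [hKprod] at h2
        omega
      have hmid : mwN (ω ++ [i]) K ω.length = mwN ω (K.erase ω.length) ω.length := by
        rw [mwN_concat, if_neg (fun h => by omega), List.append_nil,
          mwN_erase ω K (le_refl ω.length)]
      have hKfull : ππ (mwN ω (K.erase ω.length) ω.length) * ss i = v := by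
        rw [← hmid]
        rw [hlenp, mwN_concat, if_pos ⟨hKn, by omega⟩, cs.wordProd_append,
          cs.wordProd_singleton] at hKprod
        rw [mwN_truncate ω K (by omega)] at hKprod
        rw [mwN_concat, if_neg (fun h => by omega), List.append_nil]
        exact hKprod
      have hpos'' : PosN cs ω (K.erase ω.length) (v * ss i) := by
        refine ⟨?_, ?_, ?_, ?_⟩
        · intro j hj
          obtain ⟨hj1, hj2⟩ := Finset.mem_erase.mp hj
          have := Finset.mem_range.mp (hKsub hj2)
          rw [Finset.mem_range]
          rw [hlenp] at this
          omega
        · rw [← hKfull, cs.simple_mul_simple_cancel_right]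
        · rw [Finset.card_erase_of_mem hKn, hKcard]
          omega
        · intro r hr
          have hrp : r < (ω ++ [i]).length := by omega
          have h3 := hKpos r hrp
          have hmw : mwN (ω ++ [i]) K r = mwN ω (K.erase ω.length) r := by
            rw [mwN_concat, if_neg (fun h => by omega), List.append_nil,
              mwN_erase ω K (le_refl ω.length)]
          rw [hmw, get_append_left ω i hrp hr] at h3
          exact h3
      have hK''eq := hK'u (K.erase ω.length) hpos''
      rw [← Finset.insert_erase hKn, hK''eq]
    · -- Case B : the final letter is not used
      have hcase' : λλ v < λλ (v * ss i) := by omega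
      have hexB : ∃ σ', σ'.Sublist ω ∧ ππ σ' = v ∧ σ'.length = λλ v := by
        rcases List.sublist_singleton.mp hσ₂ with h2 | h2
        · subst h2
          rw [List.append_nil] at hprod hlen
          exact ⟨σ₁, hσ₁, hprod, hlen⟩
        · exfalso
          subst h2
          have hπ : ππ σ₁ * ss i = v := by
            rw [← hprod, cs.wordProd_append, cs.wordProd_singleton]
          have hvs : v * ss i = ππ σ₁ := by
            rw [← hπ, cs.simple_mul_simple_cancel_right]
          have hle := cs.length_wordProd_le σ₁
          have : (σ₁ ++ [i]).length = σ₁.length + 1 := by simp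
          rw [← hvs] at hle
          omega
      obtain ⟨K', hK', hK'u⟩ := ih hredω v hexB
      obtain ⟨hK'sub, hK'prod, hK'card, hK'pos⟩ := hK'
      have hnK' : ω.length ∉ K' := fun h => by
        have := Finset.mem_range.mp (hK'sub h); omega
      have hposB : PosN cs (ω ++ [i]) K' v := by
        refine ⟨?_, ?_, ?_, ?_⟩
        · intro j hj
          have := Finset.mem_range.mp (hK'sub hj)
          rw [Finset.mem_range]; omega
        · rw [hlenp, mwN_concat, if_neg (fun h => hnK' h.1), List.append_nil,
            mwN_truncate ω K' (by omega)]
          exact hK'prod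
        · exact hK'card
        · intro r hr
          have hmw : ∀ r', mwN (ω ++ [i]) K' r' = mwN ω K' r' := fun r' => by
            rw [mwN_concat, if_neg (fun h => hnK' h.1), List.append_nil]
          by_cases hrn : r < ω.length
          · rw [hmw, get_append_left ω i hr hrn]
            exact hK'pos r hrn
          · have hrn' : r = ω.length := by rw [hlenp] at hr; omega
            subst hrn'
            rw [hmw, get_append_last ω i hr, mwN_truncate ω K' (le_refl ω.length), hK'prod]
            exact hcase'
      refine ⟨K', hposB, ?_⟩
      intro K hK
      obtain ⟨hKsub, hKprod, hKcard, hKpos⟩ := hK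
      have hKn : ω.length ∉ K := by
        intro hKn
        have h2 := hKpos ω.length hnlt
        rw [get_append_last ω i hnlt] at h2
        rw [hlenp, mwN_concat, if_pos ⟨hKn, by omega⟩, cs.wordProd_append,
          cs.wordProd_singleton, mwN_truncate ω K (by omega)] at hKprod
        have hmw : mwN (ω ++ [i]) K ω.length = mwN ω K ω.length := by
          rw [mwN_concat, if_neg (fun h => by omega), List.append_nil]
        rw [hmw, hKprod] at h2
        have hv : ππ (mwN ω K ω.length) = v * ss i := by
          rw [← hKprod, cs.simple_mul_simple_cancel_right]
        rw [hv] at h2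
        omega
      apply hK'u
      have hsubω : K ⊆ Finset.range ω.length := by
        intro j hj
        have := Finset.mem_range.mp (hKsub hj)
        rw [Finset.mem_range]
        rw [hlenp] at this
        have : j ≠ ω.length := fun hc => hKn (hc ▸ hj)
        omega
      refine ⟨hsubω, ?_, hKcard, ?_⟩
      · rw [hlenp, mwN_concat, if_neg (fun h => hKn h.1), List.append_nil,
          mwN_truncate ω K (by omega)] at hKprod
        exact hKprod
      · intro r hr
        have hrp : r < (ω ++ [i]).length := by omega
        have h3 := hKpos r hrp
        have hmw : mwN (ω ++ [i]) K r = mwN ω K r := by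
          rw [mwN_concat, if_neg (fun h => hKn h.1), List.append_nil]
        rw [hmw, get_append_left ω i hrp hr] at h3
        exact h3


lemma isPos_iff_posN (ω : List B) (J : Finset (Fin ω.length)) (v : W) :
    IsPosSubexpr cs ω J v ↔ PosN cs ω (J.image Fin.val) v := by
  unfold IsPosSubexpr PosN prefixEl
  constructor
  · rintro ⟨h1, h2, h3⟩
    refine ⟨?_, ?_, ?_, ?_⟩
    · intro k hk
      obtain ⟨b, hb, rfl⟩ := Finset.mem_image.mp hk
      exact Finset.mem_range.mpr b.isLt
    · rw [← maskWord_eq_mwN]; exact h1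
    · rw [Finset.card_image_of_injective _ Fin.val_injective]; exact h2
    · intro r hr
      rw [← maskWord_eq_mwN]
      exact h3 ⟨r, hr⟩
  · rintro ⟨h0, h1, h2, h3⟩
    refine ⟨?_, ?_, ?_⟩
    · rw [maskWord_eq_mwN]; exact h1
    · rw [← Finset.card_image_of_injective J Fin.val_injective]; exact h2
    · intro r
      have h4 := h3 r.val r.isLt
      rw [← maskWord_eq_mwN] at h4
      simpa using h4

theorem positive_subexpression_exists_unique'
    (ω : List B) (w v : W)
    (hred : cs.IsReduced ω) (hw : cs.wordProd ω = w) (hvw : BLE cs v w) :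
    ∃! J : Finset (Fin ω.length), IsPosSubexpr cs ω J v := by
  subst hw
  obtain ⟨σ, hsub, hπ, hσlen⟩ := exists_reduced_sublist cs hred hvw
  obtain ⟨K₀, hK₀, hK₀u⟩ := auxN cs ω hred v ⟨σ, hsub, hπ, hσlen⟩
  have hK₀sub := hK₀.1
  refine ⟨Finset.filter (fun j : Fin ω.length => j.val ∈ K₀) Finset.univ, ?_, ?_⟩
  · have himg : (Finset.filter (fun j : Fin ω.length => j.val ∈ K₀) Finset.univ).image
        Fin.val = K₀ := by
      ext k
      constructor
      · intro hk
        obtain ⟨j, hj, rfl⟩ := Finset.mem_image.mp hk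
        exact (Finset.mem_filter.mp hj).2
      · intro hk
        have hkr := Finset.mem_range.mp (hK₀sub hk)
        exact Finset.mem_image.mpr ⟨⟨k, hkr⟩, Finset.mem_filter.mpr ⟨Finset.mem_univ _, hk⟩, rfl⟩
    show IsPosSubexpr cs ω (Finset.filter (fun j : Fin ω.length => j.val ∈ K₀) Finset.univ) v
    rw [isPos_iff_posN, himg]
    exact hK₀
  · intro J hJ
    have h5 : J.image Fin.val = K₀ := hK₀u _ ((isPos_iff_posN cs ω J v).mp hJ)
    apply Finset.image_injective Fin.val_injective
    rw [h5]
    ext k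
    constructor
    · intro hk
      have hkr := Finset.mem_range.mp (hK₀sub hk)
      exact Finset.mem_image.mpr ⟨⟨k, hkr⟩, Finset.mem_filter.mpr ⟨Finset.mem_univ _, hk⟩, rfl⟩
    · intro hk
      obtain ⟨j, hj, rfl⟩ := Finset.mem_image.mp hk
      exact (Finset.mem_filter.mp hj).2


end Helpers

theorem positive_subexpression_exists_unique
    (cs : CoxeterSystem M W) (ω : List B) (w v : W)
    (hred : cs.IsReduced ω) (hw : cs.wordProd ω = w) (hvw : BLE cs v w) :
    ∃! J : Finset (Fin ω.length), IsPosSubexpr cs ω J v := by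
  exact positive_subexpression_exists_unique' cs ω w v hred hw hvw

end PaperStmt
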